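/- arXiv:1210.0047 — 2 statements merged into one kernel-verified Lean document; each statement's English description precedes it below -/
import Mathlib

section
/- Let V : S → R^3 be a W^{1,2} vector field on a surface S ⊂ R^3 with sym∇V = 0, i.e. ∂_τ V(p)·η + ∂_η V(p)·τ = 0 for a.e. p ∈ S and all τ, η ∈ T_p S. Then there exists a matrix field A ∈ L^2(S, R^{3×3}) with A(p) ∈ so(3) for a.e. p and ∂_τ V(p) = A(p)τ for a.e. p ∈ S and all τ ∈ T_p S, where so(3) denotes skew-symmetric 3×3 matrices. -/
open MeasureTheory
open scoped RealInnerProductSpace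

set_option maxHeartbeats 1000000


private lemma skew_calc_aux {E : Type*} [NormedAddCommGroup E] [InnerProductSpace ℝ E]
    [CompleteSpace E] (n v w : E) (T : E →L[ℝ] E)
    (hsvw : ⟪T (v - ⟪n, v⟫ • n), w - ⟪n, w⟫ • n⟫ + ⟪T (w - ⟪n, w⟫ • n), v - ⟪n, v⟫ • n⟫ = 0) :
    ⟪T (v - ⟪n, v⟫ • n) - ⟪n, v⟫ • (ContinuousLinearMap.adjoint T n
        - ⟪n, ContinuousLinearMap.adjoint T n⟫ • n), w⟫ =
      -⟪T (w - ⟪n, w⟫ • n) - ⟪n, w⟫ • (ContinuousLinearMap.adjoint T n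
        - ⟪n, ContinuousLinearMap.adjoint T n⟫ • n), v⟫ := by
  have hA1 : ∀ x : E, ⟪ContinuousLinearMap.adjoint T n, x⟫ = ⟪n, T x⟫ :=
    fun x => ContinuousLinearMap.adjoint_inner_left T x n
  have hA2 : ⟪n, ContinuousLinearMap.adjoint T n⟫ = ⟪n, T n⟫ := by
    rw [real_inner_comm]; exact hA1 n
  simp only [map_sub, _root_.map_smul, inner_sub_left, inner_sub_right, real_inner_smul_left,
    real_inner_smul_right] at hsvw ⊢
  rw [hA1 w, hA1 v, hA2]
  have e1 : ⟪T v, n⟫ = ⟪n, T v⟫ := real_inner_comm _ _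
  have e2 : ⟪T w, n⟫ = ⟪n, T w⟫ := real_inner_comm _ _
  have e5 : ⟪T n, n⟫ = ⟪n, T n⟫ := real_inner_comm _ _
  linear_combination hsvw + ⟪n, w⟫ * e1 + ⟪n, v⟫ * e2 - 2 * ⟪n, v⟫ * ⟪n, w⟫ * e5

/-- Let `V` be a `W^{1,2}` vector field on an oriented surface
`S ⊂ ℝ³` (with unit normal `n`, tangent planes `Tan p = (ℝ n(p))^⊥` and surface
measure `μ`), whose tangential gradient `DV` satisfies `sym∇V = 0`, i.e.
`⟨∂_τ V, η⟩ + ⟨∂_η V, τ⟩ = 0` a.e.  Then there is a field `A ∈ L²` of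
skew-symmetric operators (`so(3)`) with `∂_τ V(p) = A(p) τ` for a.e. `p` and all
tangent `τ`. -/
theorem infinitesimal_isometry_skew_gradient
    (S : Set (EuclideanSpace ℝ (Fin 3)))
    (μ : Measure (EuclideanSpace ℝ (Fin 3)))
    (hμS : μ (Sᶜ) = 0)
    (n : EuclideanSpace ℝ (Fin 3) → EuclideanSpace ℝ (Fin 3))
    (hn : ∀ p ∈ S, ‖n p‖ = 1)
    (hn_meas : AEStronglyMeasurable n μ)
    (Tan : EuclideanSpace ℝ (Fin 3) → Submodule ℝ (EuclideanSpace ℝ (Fin 3)))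
    (hTan : ∀ p ∈ S, Tan p = (Submodule.span ℝ {n p})ᗮ)
    (V DV' : EuclideanSpace ℝ (Fin 3) → EuclideanSpace ℝ (Fin 3))
    (DV : EuclideanSpace ℝ (Fin 3) →
      EuclideanSpace ℝ (Fin 3) →L[ℝ] EuclideanSpace ℝ (Fin 3))
    (hV_L2 : MemLp V 2 μ)
    (hDV_L2 : MemLp (fun p => ‖DV p‖) 2 μ)
    (hDV_meas : AEStronglyMeasurable DV μ)
    -- `DV p τ` is the derivative of `V` at `p` along tangent directions `τ`
    (hderiv : ∀ᵐ p ∂μ, ∀ τ ∈ Tan p, HasLineDerivWithinAt ℝ V (DV p τ) S p τ)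
    -- `sym ∇V = 0`
    (hsym : ∀ᵐ p ∂μ, ∀ τ ∈ Tan p, ∀ η ∈ Tan p, ⟪DV p τ, η⟫ + ⟪DV p η, τ⟫ = 0) :
    ∃ A : EuclideanSpace ℝ (Fin 3) →
        EuclideanSpace ℝ (Fin 3) →L[ℝ] EuclideanSpace ℝ (Fin 3),
      MemLp (fun p => ‖A p‖) 2 μ ∧ AEStronglyMeasurable A μ ∧
      ∀ᵐ p ∂μ, (∀ v w : EuclideanSpace ℝ (Fin 3), ⟪A p v, w⟫ = -⟪A p w, v⟫) ∧
        ∀ τ ∈ Tan p, A p τ = DV p τ := by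
  set Q : EuclideanSpace ℝ (Fin 3) →
      (EuclideanSpace ℝ (Fin 3) →L[ℝ] EuclideanSpace ℝ (Fin 3)) :=
    fun p => (innerSL ℝ (n p)).smulRight (n p) with hQdef
  set P : EuclideanSpace ℝ (Fin 3) →
      (EuclideanSpace ℝ (Fin 3) →L[ℝ] EuclideanSpace ℝ (Fin 3)) :=
    fun p => ContinuousLinearMap.id ℝ (EuclideanSpace ℝ (Fin 3)) - Q p with hPdef
  set A : EuclideanSpace ℝ (Fin 3) →
      (EuclideanSpace ℝ (Fin 3) →L[ℝ] EuclideanSpace ℝ (Fin 3)) :=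
    fun p => (DV p).comp (P p) -
      ((P p).comp (ContinuousLinearMap.adjoint (DV p))).comp (Q p) with hAdef
  have hS : ∀ᵐ p ∂μ, p ∈ S := by
    rw [Filter.eventually_iff, mem_ae_iff]
    simpa using hμS
  -- measurability
  have hQc : Continuous fun v : EuclideanSpace ℝ (Fin 3) => (innerSL ℝ v).smulRight v :=
    (isBoundedBilinearMap_smulRight (𝕜 := ℝ)).continuous.comp
      ((innerSL ℝ).continuous.prodMk continuous_id)
  have hPc : Continuous fun v : EuclideanSpace ℝ (Fin 3) =>
      ContinuousLinearMap.id ℝ (EuclideanSpace ℝ (Fin 3)) - (innerSL ℝ v).smulRight v :=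
    continuous_const.sub hQc
  have hcomp : Continuous fun x : (EuclideanSpace ℝ (Fin 3) →L[ℝ] EuclideanSpace ℝ (Fin 3)) ×
      (EuclideanSpace ℝ (Fin 3) →L[ℝ] EuclideanSpace ℝ (Fin 3)) => x.1.comp x.2 :=
    isBoundedBilinearMap_comp.continuous
  have hAc : Continuous fun x : (EuclideanSpace ℝ (Fin 3) →L[ℝ] EuclideanSpace ℝ (Fin 3)) ×
      EuclideanSpace ℝ (Fin 3) =>
      x.1.comp (ContinuousLinearMap.id ℝ (EuclideanSpace ℝ (Fin 3)) -
          (innerSL ℝ x.2).smulRight x.2) -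
        ((ContinuousLinearMap.id ℝ (EuclideanSpace ℝ (Fin 3)) -
          (innerSL ℝ x.2).smulRight x.2).comp
          (ContinuousLinearMap.adjoint x.1)).comp ((innerSL ℝ x.2).smulRight x.2) := by
    have h1 := hcomp.comp (continuous_fst.prodMk (hPc.comp continuous_snd))
    have hadj : Continuous fun x : (EuclideanSpace ℝ (Fin 3) →L[ℝ] EuclideanSpace ℝ (Fin 3)) ×
        EuclideanSpace ℝ (Fin 3) => ContinuousLinearMap.adjoint x.1 :=
      (ContinuousLinearMap.adjoint (E := EuclideanSpace ℝ (Fin 3))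
        (F := EuclideanSpace ℝ (Fin 3)) (𝕜 := ℝ)).continuous.comp continuous_fst
    have h2 := hcomp.comp ((hPc.comp continuous_snd).prodMk hadj)
    have h3 := hcomp.comp (h2.prodMk (hQc.comp continuous_snd))
    exact h1.sub h3
  have hA_meas : AEStronglyMeasurable A μ := by
    have := hAc.comp_aestronglyMeasurable (hDV_meas.prodMk hn_meas)
    simpa [hAdef, hPdef, hQdef] using this
  -- norm bound a.e.
  have hbound : ∀ᵐ p ∂μ, ‖A p‖ ≤ 4 * ‖DV p‖ := by
    filter_upwards [hS] with p hp
    have hn1 : ‖n p‖ = 1 := hn p hp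
    have hQn : ‖Q p‖ ≤ 1 := by
      rw [hQdef]
      simp only
      rw [ContinuousLinearMap.norm_smulRight_apply]
      calc ‖innerSL ℝ (n p)‖ * ‖n p‖ ≤ ‖n p‖ * ‖n p‖ := by
            gcongr
            exact (innerSL ℝ (n p)).opNorm_le_bound (norm_nonneg _)
              (fun x => by simpa using abs_real_inner_le_norm (n p) x)
        _ = 1 := by rw [hn1]; ring
    have hPn : ‖P p‖ ≤ 2 := by
      calc ‖P p‖ ≤ ‖ContinuousLinearMap.id ℝ (EuclideanSpace ℝ (Fin 3))‖ + ‖Q p‖ :=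
            norm_sub_le _ _
        _ ≤ 1 + 1 := add_le_add ContinuousLinearMap.norm_id_le hQn
        _ = 2 := by norm_num
    have hadjn : ‖ContinuousLinearMap.adjoint (DV p)‖ = ‖DV p‖ :=
      (ContinuousLinearMap.adjoint (E := EuclideanSpace ℝ (Fin 3))
        (F := EuclideanSpace ℝ (Fin 3)) (𝕜 := ℝ)).norm_map (DV p)
    have hb1 : ‖(DV p).comp (P p)‖ ≤ ‖DV p‖ * ‖P p‖ := ContinuousLinearMap.opNorm_comp_le _ _
    have hb2 : ‖((P p).comp (ContinuousLinearMap.adjoint (DV p))).comp (Q p)‖ ≤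
        ‖(P p).comp (ContinuousLinearMap.adjoint (DV p))‖ * ‖Q p‖ :=
      ContinuousLinearMap.opNorm_comp_le _ _
    have hb3 : ‖(P p).comp (ContinuousLinearMap.adjoint (DV p))‖ ≤
        ‖P p‖ * ‖ContinuousLinearMap.adjoint (DV p)‖ := ContinuousLinearMap.opNorm_comp_le _ _
    have h0 : (0:ℝ) ≤ ‖DV p‖ := norm_nonneg _
    have h0P : (0:ℝ) ≤ ‖P p‖ := norm_nonneg _
    have h0Q : (0:ℝ) ≤ ‖Q p‖ := norm_nonneg _
    have h0c : (0:ℝ) ≤ ‖(P p).comp (ContinuousLinearMap.adjoint (DV p))‖ := norm_nonneg _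
    calc ‖A p‖ ≤ ‖(DV p).comp (P p)‖ +
          ‖((P p).comp (ContinuousLinearMap.adjoint (DV p))).comp (Q p)‖ := norm_sub_le _ _
      _ ≤ 4 * ‖DV p‖ := by nlinarith [hadjn, hb1, hb2, hb3, hPn, hQn]
  have hA_L2 : MemLp (fun p => ‖A p‖) 2 μ := by
    refine MemLp.of_le (hDV_L2.const_mul 4) hA_meas.norm ?_
    filter_upwards [hbound] with p hb
    have h4 : (0:ℝ) ≤ 4 * ‖DV p‖ := by positivity
    simpa [abs_of_nonneg (norm_nonneg (A p)), abs_of_nonneg h4, Real.norm_eq_abs] using hb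
  refine ⟨A, hA_L2, hA_meas, ?_⟩
  filter_upwards [hS, hsym] with p hp hsymp
  have hn1 : ‖n p‖ = 1 := hn p hp
  have hnn : ⟪n p, n p⟫ = 1 := by
    rw [real_inner_self_eq_norm_sq, hn1]; norm_num
  have hTp := hTan p hp
  have htann : ∀ τ ∈ Tan p, ⟪n p, τ⟫ = 0 := by
    intro τ hτ
    rw [hTp] at hτ
    exact (Submodule.mem_orthogonal _ _).1 hτ (n p) (Submodule.mem_span_singleton_self _)
  have hmem : ∀ v : EuclideanSpace ℝ (Fin 3), v - ⟪n p, v⟫ • n p ∈ Tan p := by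
    intro v
    rw [hTp, Submodule.mem_orthogonal]
    intro u hu
    obtain ⟨c, rfl⟩ := Submodule.mem_span_singleton.1 hu
    rw [real_inner_smul_left, inner_sub_right, real_inner_smul_right, hnn]
    ring
  have hAv : ∀ v : EuclideanSpace ℝ (Fin 3), A p v = DV p (v - ⟪n p, v⟫ • n p) -
      ⟪n p, v⟫ • (ContinuousLinearMap.adjoint (DV p) (n p)
        - ⟪n p, ContinuousLinearMap.adjoint (DV p) (n p)⟫ • n p) := by
    intro v
    simp only [hAdef, hPdef, hQdef, ContinuousLinearMap.sub_apply,
      ContinuousLinearMap.coe_comp', Function.comp_apply, ContinuousLinearMap.coe_id',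
      id_eq, ContinuousLinearMap.smulRight_apply, innerSL_apply_apply, _root_.map_smul,
      real_inner_smul_right, smul_sub, smul_smul]
  constructor
  · intro v w
    have hsvw := hsymp _ (hmem v) _ (hmem w)
    rw [hAv v, hAv w]
    exact skew_calc_aux (n p) v w (DV p) hsvw
  · intro τ hτ
    have h0 : ⟪n p, τ⟫ = 0 := htann τ hτ
    rw [hAv τ, h0]
    simp
end

section
/- Let Γ ∈ C^{1,1}([0,T], R^2) be arclength parametrized with normal N = (Γ')^⊥ and curvature κ, s^± ∈ C^{0,1}([0,T]) positive, and assume the open segments [Γ(t)] = {Γ(t) + sN(t) : s ∈ (−s^-(t), s^+(t))} are pairwise disjoint for distinct t ∈ [0,T]. Then κ(t) ∈ [−1/s^-(t), 1/s^+(t)] for almost every t ∈ (0,T). -/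
set_option maxHeartbeats 1000000

lemma absmul (x y c d : ℝ) (hx : |x| ≤ c) (hy : |y| ≤ d) : |x*y| ≤ c*d := by
  rw [abs_mul]; exact mul_le_mul hx hy (abs_nonneg _) ((abs_nonneg x).trans hx)

lemma sigma_est (k r δ Num D s : ℝ) (hk : k ≠ 0) (hr : 0 < r) (hδ : 0 < δ) (hr1 : r ≤ 1)
    (hN : |Num - 2*r| ≤ 16*δ*r^2) (hDe : |D - 2*r*k| ≤ 10*(δ*r))
    (hDlb : r*|k| ≤ |D|) (hs : s = Num/D) :
    |s - 1/k| ≤ δ*(16/|k| + 10/|k|^2) := by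
  have hK : 0 < |k| := abs_pos.mpr hk
  have hDne : D ≠ 0 := by
    intro h; rw [h, abs_zero] at hDlb; nlinarith
  have hsd : s - 1/k = (Num - (1/k)*D)/D := by
    rw [hs, sub_div, mul_div_assoc, div_self hDne, mul_one]
  have hnum : |Num - (1/k)*D| ≤ 16*δ*r^2 + (1/|k|)*(10*(δ*r)) := by
    have h1 : Num - (1/k)*D = (Num - 2*r) - (1/k)*(D - 2*r*k) := by field_simp; ring
    have h2 : |(1/k)*(D - 2*r*k)| ≤ (1/|k|)*(10*(δ*r)) := by
      rw [abs_mul, abs_div, abs_one]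
      exact mul_le_mul le_rfl hDe (abs_nonneg _) (by positivity)
    calc |Num - (1/k)*D| = |(Num - 2*r) - (1/k)*(D - 2*r*k)| := by rw [h1]
      _ ≤ |Num - 2*r| + |(1/k)*(D - 2*r*k)| := abs_sub _ _
      _ ≤ 16*δ*r^2 + (1/|k|)*(10*(δ*r)) := by linarith
  rw [hsd, abs_div]
  calc |Num - (1/k)*D| / |D| ≤ (16*δ*r^2 + (1/|k|)*(10*(δ*r))) / (r*|k|) := by
        apply div_le_div₀ (by positivity) hnum (by positivity) hDlb
    _ ≤ δ*(16/|k| + 10/|k|^2) := by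
        rw [div_le_iff₀ (by positivity)]
        have : 16*δ*r^2 ≤ 16*δ*r := by nlinarith [mul_le_mul_of_nonneg_left hr1 (show (0:ℝ) ≤ 16*δ*r by positivity)]
        have h2 : δ*(16/|k| + 10/|k|^2) * (r*|k|) = 16*δ*r + (1/|k|)*(10*(δ*r)) := by
          field_simp
        linarith [h2]

lemma core_est (k r δ e1 e2 a1 a2 b1 b2 E1 E2 u11 u12 u21 u22 w1 w2 D s1 s2 : ℝ)
    (hk : k ≠ 0) (hr : 0 < r) (hδ : 0 < δ) (hr1 : r ≤ 1) (hδ1 : δ ≤ 1)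
    (hrk : r * |k| ≤ 1) (hδk : 20 * δ ≤ |k|)
    (he : e1^2 + e2^2 = 1)
    (ha1 : |a1| ≤ δ*r) (ha2 : |a2| ≤ δ*r) (hb1 : |b1| ≤ δ*r) (hb2 : |b2| ≤ δ*r)
    (hE1 : |E1| ≤ 2*δ*r^2) (hE2 : |E2| ≤ 2*δ*r^2)
    (hu11 : u11 = e1 + r*k*e2 + a1) (hu12 : u12 = e2 - r*k*e1 + a2)
    (hu21 : u21 = e1 - r*k*e2 + b1) (hu22 : u22 = e2 + r*k*e1 + b2)
    (hw1 : w1 = 2*r*e1 + E1) (hw2 : w2 = 2*r*e2 + E2)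
    (hD : D = u11*u22 - u12*u21)
    (hs1 : s1 = (w1*u21 + w2*u22)/D) (hs2 : s2 = (w1*u11 + w2*u12)/D) :
    r * |k| ≤ |D| ∧ |s1 - 1/k| ≤ δ*(16/|k| + 10/|k|^2) ∧ |s2 - 1/k| ≤ δ*(16/|k| + 10/|k|^2) := by
  have he1 : |e1| ≤ 1 := abs_le.mpr ⟨by nlinarith [sq_nonneg e2, sq_nonneg (e1+1)], by nlinarith [sq_nonneg e2, sq_nonneg (e1-1)]⟩
  have he2 : |e2| ≤ 1 := abs_le.mpr ⟨by nlinarith [sq_nonneg e1, sq_nonneg (e2+1)], by nlinarith [sq_nonneg e1, sq_nonneg (e2-1)]⟩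
  have hK : 0 < |k| := abs_pos.mpr hk
  have hδr : 0 < δ * r := by positivity
  have hδr1 : δ * r ≤ 1 := by nlinarith
  have hrk' : |r*k| ≤ 1 := by rwa [abs_mul, abs_of_pos hr]
  -- D estimate
  have hDexp : D - 2*r*k = (e1*b2 - e2*b1 + (a1*e2 - a2*e1)) + (r*k)*(e2*b2 + a1*e1 + e1*b1 + a2*e2) + (a1*b2 - a2*b1) := by
    rw [hD, hu11, hu12, hu21, hu22]; linear_combination (2*r*k)*he
  have hS2 : |e2*b2 + a1*e1 + e1*b1 + a2*e2| ≤ 4*(δ*r) := by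
    have h1 := absmul e2 b2 1 (δ*r) he2 hb2
    have h2 := absmul a1 e1 (δ*r) 1 ha1 he1
    have h3 := absmul e1 b1 1 (δ*r) he1 hb1
    have h4 := absmul a2 e2 (δ*r) 1 ha2 he2
    calc |e2*b2 + a1*e1 + e1*b1 + a2*e2| ≤ |e2*b2 + a1*e1 + e1*b1| + |a2*e2| := abs_add_le _ _
      _ ≤ (|e2*b2 + a1*e1| + |e1*b1|) + |a2*e2| := by gcongr ?_ + _; exact abs_add_le _ _
      _ ≤ ((|e2*b2| + |a1*e1|) + |e1*b1|) + |a2*e2| := by gcongr ?_ + _ + _; exact abs_add_le _ _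
      _ ≤ 4*(δ*r) := by linarith
  have hab : |a1*b2 - a2*b1| ≤ 2*(δ*r) := by
    have h1 := absmul a1 b2 (δ*r) (δ*r) ha1 hb2
    have h2 := absmul a2 b1 (δ*r) (δ*r) ha2 hb1
    calc |a1*b2 - a2*b1| ≤ |a1*b2| + |a2*b1| := abs_sub _ _
      _ ≤ 2*(δ*r) := by nlinarith
  have hS1 : |e1*b2 - e2*b1 + (a1*e2 - a2*e1)| ≤ 4*(δ*r) := by
    have h1 := absmul e1 b2 1 (δ*r) he1 hb2
    have h2 := absmul e2 b1 1 (δ*r) he2 hb1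
    have h3 := absmul a1 e2 (δ*r) 1 ha1 he2
    have h4 := absmul a2 e1 (δ*r) 1 ha2 he1
    calc |e1*b2 - e2*b1 + (a1*e2 - a2*e1)| ≤ |e1*b2 - e2*b1| + |a1*e2 - a2*e1| := abs_add_le _ _
      _ ≤ (|e1*b2| + |e2*b1|) + (|a1*e2| + |a2*e1|) := by gcongr <;> exact abs_sub _ _
      _ ≤ 4*(δ*r) := by linarith
  have hDerr : |D - 2*r*k| ≤ 10*(δ*r) := by
    have hmid := absmul (r*k) (e2*b2 + a1*e1 + e1*b1 + a2*e2) 1 (4*(δ*r)) hrk' hS2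
    calc |D - 2*r*k| = |(e1*b2 - e2*b1 + (a1*e2 - a2*e1)) + (r*k)*(e2*b2 + a1*e1 + e1*b1 + a2*e2) + (a1*b2 - a2*b1)| := by rw [hDexp]
      _ ≤ |(e1*b2 - e2*b1 + (a1*e2 - a2*e1)) + (r*k)*(e2*b2 + a1*e1 + e1*b1 + a2*e2)| + |a1*b2 - a2*b1| := abs_add_le _ _
      _ ≤ (|e1*b2 - e2*b1 + (a1*e2 - a2*e1)| + |(r*k)*(e2*b2 + a1*e1 + e1*b1 + a2*e2)|) + |a1*b2 - a2*b1| := by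
          gcongr ?_ + _; exact abs_add_le _ _
      _ ≤ 10*(δ*r) := by linarith
  have hDlb : r * |k| ≤ |D| := by
    have h2rk : |2*r*k| = 2*(r*|k|) := by
      rw [abs_mul, abs_mul, abs_of_pos hr, abs_two]; ring
    have h3 := abs_sub_abs_le_abs_sub (2*r*k) D
    rw [abs_sub_comm] at h3
    nlinarith [abs_nonneg D]
  -- norm bounds on u
  have hu21b : |u21| ≤ 3 := by
    have h1 := absmul (r*k) e2 1 1 hrk' he2
    calc |u21| = |e1 - r*k*e2 + b1| := by rw [hu21]
      _ ≤ |e1 - r*k*e2| + |b1| := abs_add_le _ _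
      _ ≤ (|e1| + |r*k*e2|) + |b1| := by gcongr ?_ + _; exact abs_sub _ _
      _ ≤ 3 := by linarith
  have hu22b : |u22| ≤ 3 := by
    have h1 := absmul (r*k) e1 1 1 hrk' he1
    calc |u22| = |e2 + r*k*e1 + b2| := by rw [hu22]
      _ ≤ |e2 + r*k*e1| + |b2| := abs_add_le _ _
      _ ≤ (|e2| + |r*k*e1|) + |b2| := by gcongr ?_ + _; exact abs_add_le _ _
      _ ≤ 3 := by linarith
  have hu11b : |u11| ≤ 3 := by
    have h1 := absmul (r*k) e2 1 1 hrk' he2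
    calc |u11| = |e1 + r*k*e2 + a1| := by rw [hu11]
      _ ≤ |e1 + r*k*e2| + |a1| := abs_add_le _ _
      _ ≤ (|e1| + |r*k*e2|) + |a1| := by gcongr ?_ + _; exact abs_add_le _ _
      _ ≤ 3 := by linarith
  have hu12b : |u12| ≤ 3 := by
    have h1 := absmul (r*k) e1 1 1 hrk' he1
    calc |u12| = |e2 - r*k*e1 + a2| := by rw [hu12]
      _ ≤ |e2 - r*k*e1| + |a2| := abs_add_le _ _
      _ ≤ (|e2| + |r*k*e1|) + |a2| := by gcongr ?_ + _; exact abs_sub _ _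
      _ ≤ 3 := by linarith
  -- numerators
  have hNum : ∀ v1 v2 c1 c2 : ℝ, |v1| ≤ 3 → |v2| ≤ 3 → |c1| ≤ δ*r → |c2| ≤ δ*r →
      |2*r*(e1*c1 + e2*c2) + (E1*v1 + E2*v2)| ≤ 16*δ*r^2 := by
    intro v1 v2 c1 c2 hv1 hv2 hc1 hc2
    have h1 := absmul e1 c1 1 (δ*r) he1 hc1
    have h2 := absmul e2 c2 1 (δ*r) he2 hc2
    have h3 := absmul E1 v1 (2*δ*r^2) 3 hE1 hv1
    have h4 := absmul E2 v2 (2*δ*r^2) 3 hE2 hv2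
    have h5 : |e1*c1 + e2*c2| ≤ 2*(δ*r) := by
      calc |e1*c1 + e2*c2| ≤ |e1*c1| + |e2*c2| := abs_add_le _ _
        _ ≤ 2*(δ*r) := by linarith
    have h6 := absmul (2*r) (e1*c1 + e2*c2) (2*r) (2*(δ*r)) (by rw [abs_mul, abs_of_pos hr]; norm_num) h5
    have h7 : |E1*v1 + E2*v2| ≤ 12*δ*r^2 := by
      calc |E1*v1 + E2*v2| ≤ |E1*v1| + |E2*v2| := abs_add_le _ _
        _ ≤ 12*δ*r^2 := by linarith
    calc |2*r*(e1*c1 + e2*c2) + (E1*v1 + E2*v2)| ≤ |2*r*(e1*c1 + e2*c2)| + |E1*v1 + E2*v2| := abs_add_le _ _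
      _ ≤ 16*δ*r^2 := by nlinarith
  have hN1 : |(w1*u21 + w2*u22) - 2*r| ≤ 16*δ*r^2 := by
    have hexp : (w1*u21 + w2*u22) - 2*r = 2*r*(e1*b1 + e2*b2) + (E1*u21 + E2*u22) := by
      rw [hw1, hw2, hu21, hu22]; linear_combination (2*r)*he
    rw [hexp]; exact hNum u21 u22 b1 b2 hu21b hu22b hb1 hb2
  have hN2 : |(w1*u11 + w2*u12) - 2*r| ≤ 16*δ*r^2 := by
    have hexp : (w1*u11 + w2*u12) - 2*r = 2*r*(e1*a1 + e2*a2) + (E1*u11 + E2*u12) := by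
      rw [hw1, hw2, hu11, hu12]; linear_combination (2*r)*he
    rw [hexp]; exact hNum u11 u12 a1 a2 hu11b hu12b ha1 ha2
  exact ⟨hDlb, sigma_est k r δ _ D s1 hk hr hδ hr1 hN1 hDerr hDlb hs1,
         sigma_est k r δ _ D s2 hk hr hδ hr1 hN2 hDerr hDlb hs2⟩

open MeasureTheory

/-- Let `Γ ∈ C^{1,1}([0,T], ℝ²)` be arclength parametrized with
normal `N = (Γ')^⊥` and curvature `κ`, let `s^± ∈ C^{0,1}([0,T])` be positive,
and assume the open normal segments `[Γ(t)] = {Γ(t) + sN(t) : s ∈ (−s⁻(t), s⁺(t))}`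
are pairwise disjoint for distinct `t ∈ [0,T]`.  Then
`κ(t) ∈ [−1/s⁻(t), 1/s⁺(t)]` for a.e. `t ∈ (0,T)`. -/
theorem curvature_bounds_from_disjoint_rulings
    (T : ℝ) (hT : 0 < T)
    (Γ Γ' Γ'' : ℝ → ℝ × ℝ)
    (hΓ' : ∀ t ∈ Set.Icc 0 T, HasDerivAt Γ (Γ' t) t)
    (hΓ'lip : ∃ K, LipschitzOnWith K Γ' (Set.Icc 0 T))
    (hΓ'' : ∀ᵐ t ∂(volume.restrict (Set.Ioo 0 T)), HasDerivAt Γ' (Γ'' t) t)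
    (harc : ∀ t ∈ Set.Icc 0 T, (Γ' t).1 ^ 2 + (Γ' t).2 ^ 2 = 1)
    (N : ℝ → ℝ × ℝ) (hN : ∀ t, N t = (-(Γ' t).2, (Γ' t).1))
    (κ : ℝ → ℝ) (hκ : ∀ t, κ t = (Γ'' t).1 * (N t).1 + (Γ'' t).2 * (N t).2)
    (sm sp : ℝ → ℝ)
    (hsm : ∀ t ∈ Set.Icc 0 T, 0 < sm t) (hsp : ∀ t ∈ Set.Icc 0 T, 0 < sp t)
    (hsmLip : ∃ K, LipschitzOnWith K sm (Set.Icc 0 T))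
    (hspLip : ∃ K, LipschitzOnWith K sp (Set.Icc 0 T))
    (seg : ℝ → Set (ℝ × ℝ))
    (hseg : ∀ t, seg t = (fun s => Γ t + s • N t) '' Set.Ioo (-(sm t)) (sp t))
    (hdisj : ∀ t₁ ∈ Set.Icc 0 T, ∀ t₂ ∈ Set.Icc 0 T, t₁ ≠ t₂ → seg t₁ ∩ seg t₂ = ∅) :
    ∀ᵐ t ∂(volume.restrict (Set.Ioo 0 T)), κ t ∈ Set.Icc (-(1 / sm t)) (1 / sp t) := by
  obtain ⟨Ksm, hKsm⟩ := hsmLip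
  obtain ⟨Ksp, hKsp⟩ := hspLip
  have hmem : ∀ᵐ t ∂(volume.restrict (Set.Ioo 0 T)), t ∈ Set.Ioo 0 T :=
    ae_restrict_mem measurableSet_Ioo
  filter_upwards [hΓ'', hmem] with a hd ha
  have haIcc : a ∈ Set.Icc 0 T := ⟨ha.1.le, ha.2.le⟩
  have hsma : 0 < sm a := hsm a haIcc
  have hspa : 0 < sp a := hsp a haIcc
  have he : (Γ' a).1 ^ 2 + (Γ' a).2 ^ 2 = 1 := harc a haIcc
  have horth : (Γ' a).1 * (Γ'' a).1 + (Γ' a).2 * (Γ'' a).2 = 0 := by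
    have hfst : HasDerivAt (fun t => (Γ' t).1) (Γ'' a).1 a := hd.fst
    have hsnd : HasDerivAt (fun t => (Γ' t).2) (Γ'' a).2 a := hd.snd
    have h1 : HasDerivAt (fun t => (Γ' t).1 ^ 2 + (Γ' t).2 ^ 2)
        (2 * (Γ' a).1 ^ 1 * (Γ'' a).1 + 2 * (Γ' a).2 ^ 1 * (Γ'' a).2) a :=
      (hfst.pow 2).add (hsnd.pow 2)
    have hev : (fun t => (Γ' t).1 ^ 2 + (Γ' t).2 ^ 2) =ᶠ[nhds a] (fun _ => (1:ℝ)) := by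
      filter_upwards [Ioo_mem_nhds ha.1 ha.2] with t ht
      exact harc t ⟨ht.1.le, ht.2.le⟩
    have h2 : HasDerivAt (fun t => (Γ' t).1 ^ 2 + (Γ' t).2 ^ 2) 0 a :=
      (hasDerivAt_const a (1:ℝ)).congr_of_eventuallyEq hev
    have h3 := h1.unique h2
    linear_combination h3/2
  set e1 := (Γ' a).1 with he1def
  set e2 := (Γ' a).2 with he2def
  set k := κ a with hkdef'
  have hkdef : k = (Γ'' a).1 * (-e2) + (Γ'' a).2 * e1 := by rw [hkdef', hκ, hN]
  have hG1 : (Γ'' a).1 = k * (-e2) := by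
    rw [hkdef]; linear_combination (Γ' a).1*horth - (Γ'' a).1*he
  have hG2 : (Γ'' a).2 = k * e1 := by
    rw [hkdef]; linear_combination (Γ' a).2*horth - (Γ'' a).2*he
  have hGa : Γ'' a = k • ((-e2, e1) : ℝ × ℝ) := Prod.ext hG1 hG2
  by_contra hcon
  rw [Set.mem_Icc, not_and_or] at hcon
  have hk0 : k ≠ 0 := by
    rcases hcon with h | h <;> push_neg at h <;> intro h0 <;> rw [h0] at h
    · have : 0 < 1 / sm a := by positivity
      linarith
    · have : 0 < 1 / sp a := by positivity
      linarith
  have hρ1 : -(sm a) < 1/k := by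
    rcases hcon with h | h
    · push_neg at h
      have hkneg : k < 0 := by
        have : 0 < 1 / sm a := by positivity
        linarith
      have h' : k * sm a < -1 := by
        have h2 : k < -(1/sm a) := h
        have := mul_lt_mul_of_pos_right h2 hsma
        rw [neg_mul, div_mul_cancel₀ (1:ℝ) hsma.ne'] at this
        linarith
      have hpos : 0 < (1 + k*sm a)/k := by
        rw [← neg_div_neg_eq]
        exact div_pos (by linarith) (by linarith)
      have heq : (1 + k*sm a)/k = 1/k + sm a := by
        field_simp
      linarith
    · push_neg at h
      have hkpos : 0 < k := lt_trans (by positivity) h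
      have : 0 < 1/k := by positivity
      linarith
  have hρ2 : 1/k < sp a := by
    rcases hcon with h | h
    · push_neg at h
      have hkneg : k < 0 := by
        have : 0 < 1 / sm a := by positivity
        linarith
      have : 1/k < 0 := div_neg_of_pos_of_neg one_pos hkneg
      linarith
    · push_neg at h
      have hkpos : 0 < k := lt_trans (by positivity) h
      rw [div_lt_iff₀ hkpos]
      have := mul_lt_mul_of_pos_right h hspa
      rw [div_mul_cancel₀ (1:ℝ) hspa.ne'] at this
      linarith
  set K := |k| with hKdef
  have hK : 0 < K := abs_pos.mpr hk0
  set η := min ((sp a - 1/k)/2) ((1/k + sm a)/2) with hηdef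
  have hη : 0 < η := lt_min (by linarith) (by linarith)
  have hη1 : η ≤ (sp a - 1/k)/2 := min_le_left _ _
  have hη2 : η ≤ (1/k + sm a)/2 := min_le_right _ _
  set Cb := 16/K + 10/K^2 with hCbdef
  have hCb : 0 < Cb := by positivity
  set δ := min (min 1 (K/20)) (η/Cb) with hδdef
  have hδ : 0 < δ := lt_min (lt_min one_pos (by positivity)) (by positivity)
  have hδ1 : δ ≤ 1 := le_trans (min_le_left _ _) (min_le_left _ _)
  have hδK : 20 * δ ≤ K := by
    have h1 : δ ≤ K/20 :=
      le_trans (min_le_left (min 1 (K/20)) (η/Cb)) (min_le_right 1 (K/20))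
    linarith
  have hδCb : δ * Cb ≤ η := by
    have h := min_le_right (min 1 (K/20)) (η/Cb)
    calc δ * Cb ≤ (η/Cb) * Cb := mul_le_mul_of_nonneg_right h hCb.le
      _ = η := div_mul_cancel₀ η hCb.ne'
  obtain ⟨r₁, hr₁, hlo⟩ : ∃ r₁ > 0, ∀ t : ℝ, dist t a < r₁ →
      ‖Γ' t - Γ' a - (t - a) • Γ'' a‖ ≤ δ * ‖t - a‖ := by
    have h := (hasDerivAt_iff_isLittleO.mp hd).def hδ
    rw [Metric.eventually_nhds_iff] at h
    obtain ⟨r₁, hr₁, h⟩ := h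
    exact ⟨r₁, hr₁, fun t ht => h ht⟩
  set r := min (min (min (r₁/2) (a/2)) (min ((T-a)/2) 1))
        (min (1/K) (min (η/((Ksm:ℝ)+1)) (η/((Ksp:ℝ)+1)))) with hrdef
  have hr : 0 < r := by
    apply lt_min
    · exact lt_min (lt_min (by linarith) (by linarith [ha.1])) (lt_min (by linarith [ha.2]) one_pos)
    · exact lt_min (by positivity) (lt_min (by positivity) (by positivity))
  have hrr₁ : r < r₁ := by
    have : r ≤ r₁/2 := le_trans (min_le_left _ _) (le_trans (min_le_left _ _) (min_le_left _ _))
    linarith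
  have hra : r < a := by
    have : r ≤ a/2 := le_trans (min_le_left _ _) (le_trans (min_le_left _ _) (min_le_right _ _))
    linarith [ha.1]
  have hrT : r < T - a := by
    have : r ≤ (T-a)/2 := le_trans (min_le_left _ _) (le_trans (min_le_right _ _) (min_le_left _ _))
    linarith [ha.2]
  have hr1 : r ≤ 1 := le_trans (min_le_left _ _) (le_trans (min_le_right _ _) (min_le_right _ _))
  have hrK : r * K ≤ 1 := by
    have h : r ≤ 1/K := le_trans (min_le_right _ _) (min_le_left _ _)
    rw [le_div_iff₀ hK] at h
    linarith
  have hrsm : (Ksm:ℝ) * r < η := by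
    have h : r ≤ η/((Ksm:ℝ)+1) :=
      le_trans (min_le_right _ _) (le_trans (min_le_right _ _) (min_le_left _ _))
    rw [le_div_iff₀ (by positivity)] at h
    have hexp : r*((Ksm:ℝ)+1) = (Ksm:ℝ)*r + r := by ring
    linarith only [h, hr, hexp]
  have hrsp : (Ksp:ℝ) * r < η := by
    have h : r ≤ η/((Ksp:ℝ)+1) :=
      le_trans (min_le_right _ _) (le_trans (min_le_right _ _) (min_le_right _ _))
    rw [le_div_iff₀ (by positivity)] at h
    have hexp : r*((Ksp:ℝ)+1) = (Ksp:ℝ)*r + r := by ring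
    linarith only [h, hr, hexp]
  set t₁ := a - r with ht₁def
  set t₂ := a + r with ht₂def
  have ht₁ : t₁ ∈ Set.Icc 0 T := ⟨by rw [ht₁def]; linarith, by rw [ht₁def]; linarith [ha.2]⟩
  have ht₂ : t₂ ∈ Set.Icc 0 T := ⟨by rw [ht₂def]; linarith [ha.1], by rw [ht₂def]; linarith⟩
  have hloβ : ∀ t : ℝ, |t - a| ≤ r → ‖Γ' t - Γ' a - (t - a) • Γ'' a‖ ≤ δ * r := by
    intro t ht
    have h1 := hlo t (by rw [Real.dist_eq]; linarith [ht, hrr₁])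
    have h2 : ‖t - a‖ ≤ r := ht
    calc ‖Γ' t - Γ' a - (t - a) • Γ'' a‖ ≤ δ * ‖t - a‖ := h1
      _ ≤ δ * r := mul_le_mul_of_nonneg_left h2 hδ.le
  have habs₁ : |t₁ - a| ≤ r := by rw [ht₁def]; rw [show a - r - a = -r by ring, abs_neg, abs_of_pos hr]
  have habs₂ : |t₂ - a| ≤ r := by rw [ht₂def]; rw [show a + r - a = r by ring, abs_of_pos hr]
  set a1 := (Γ' t₁).1 - (e1 + r*k*e2) with ha1def
  set a2 := (Γ' t₁).2 - (e2 - r*k*e1) with ha2def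
  set b1 := (Γ' t₂).1 - (e1 - r*k*e2) with hb1def
  set b2 := (Γ' t₂).2 - (e2 + r*k*e1) with hb2def
  have hvec₁ : Γ' t₁ - Γ' a - (t₁ - a) • Γ'' a = (a1, a2) := by
    rw [hGa]
    apply Prod.ext
    · show (Γ' t₁).1 - (Γ' a).1 - (t₁ - a) * (k * (-e2)) = a1
      rw [ha1def, ht₁def, ← he1def]; ring
    · show (Γ' t₁).2 - (Γ' a).2 - (t₁ - a) * (k * e1) = a2
      rw [ha2def, ht₁def, ← he2def]; ring
  have hvec₂ : Γ' t₂ - Γ' a - (t₂ - a) • Γ'' a = (b1, b2) := by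
    rw [hGa]
    apply Prod.ext
    · show (Γ' t₂).1 - (Γ' a).1 - (t₂ - a) * (k * (-e2)) = b1
      rw [hb1def, ht₂def, ← he1def]; ring
    · show (Γ' t₂).2 - (Γ' a).2 - (t₂ - a) * (k * e1) = b2
      rw [hb2def, ht₂def, ← he2def]; ring
  have ha1 : |a1| ≤ δ * r := by
    have h := hloβ t₁ habs₁; rw [hvec₁] at h
    exact le_trans (norm_fst_le ((a1, a2) : ℝ × ℝ)) h
  have ha2 : |a2| ≤ δ * r := by
    have h := hloβ t₁ habs₁; rw [hvec₁] at h
    exact le_trans (norm_snd_le ((a1, a2) : ℝ × ℝ)) h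
  have hb1 : |b1| ≤ δ * r := by
    have h := hloβ t₂ habs₂; rw [hvec₂] at h
    exact le_trans (norm_fst_le ((b1, b2) : ℝ × ℝ)) h
  have hb2 : |b2| ≤ δ * r := by
    have h := hloβ t₂ habs₂; rw [hvec₂] at h
    exact le_trans (norm_snd_le ((b1, b2) : ℝ × ℝ)) h
  set E1 := (Γ t₂).1 - (Γ t₁).1 - 2*r*e1 with hE1def
  set E2 := (Γ t₂).2 - (Γ t₁).2 - 2*r*e2 with hE2def
  have hchord : ‖Γ t₂ - Γ t₁ - (2*r) • Γ' a‖ ≤ (δ*r) * (2*r) := by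
    set n : ℝ × ℝ := (-e2, e1) with hndef
    set g := fun t => Γ t - t • Γ' a - ((k*(t-a)^2/2)) • n with hgdef
    have hIcc : Set.Icc t₁ t₂ ⊆ Set.Icc 0 T := fun t ht =>
      ⟨le_trans ht₁.1 ht.1, le_trans ht.2 ht₂.2⟩
    have hgd : ∀ t ∈ Set.Icc t₁ t₂, HasDerivWithinAt g
        (Γ' t - Γ' a - (t - a) • Γ'' a) (Set.Icc t₁ t₂) t := by
      intro t ht
      have h1 := (hΓ' t (hIcc ht)).sub ((hasDerivAt_id t).smul_const (Γ' a))
      have hq : HasDerivAt (fun t : ℝ => k*(t-a)^2/2) (k*(t-a)) t := by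
        have hq1 : HasDerivAt (fun t : ℝ => (t-a)^2) (2*(t-a)^1*1) t :=
          ((hasDerivAt_id t).sub_const a).pow 2
        have hq2 := hq1.const_mul (k/2)
        have hq3 : HasDerivAt (fun t : ℝ => k*(t-a)^2/2) (k/2*(2*(t-a)^1*1)) t := by
          rw [show (fun t : ℝ => k*(t-a)^2/2) = fun y => k/2*(y-a)^2 by funext t; ring]; exact hq2
        convert hq3 using 1; ring
      have h2 := hq.smul_const n
      have h3 := h1.sub h2
      have heq : Γ' t - (1:ℝ) • Γ' a - (k*(t-a)) • n = Γ' t - Γ' a - (t - a) • Γ'' a := by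
        rw [hGa, one_smul, smul_smul, mul_comm (t - a) k]
      rw [← heq]
      exact h3.hasDerivWithinAt
    have hbd : ∀ t ∈ Set.Icc t₁ t₂, ‖Γ' t - Γ' a - (t - a) • Γ'' a‖ ≤ δ * r := by
      intro t ht
      apply hloβ
      have h1 : a - r ≤ t := by rw [← ht₁def]; exact ht.1
      have h2 : t ≤ a + r := by rw [← ht₂def]; exact ht.2
      rw [abs_sub_le_iff]
      exact ⟨by linarith, by linarith⟩
    have ht₁m : t₁ ∈ Set.Icc t₁ t₂ := ⟨le_refl _, by rw [ht₁def, ht₂def]; linarith⟩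
    have ht₂m : t₂ ∈ Set.Icc t₁ t₂ := ⟨by rw [ht₁def, ht₂def]; linarith, le_refl _⟩
    have key := (convex_Icc t₁ t₂).norm_image_sub_le_of_norm_hasDerivWithin_le hgd hbd ht₁m ht₂m
    have hgsub : g t₂ - g t₁ = Γ t₂ - Γ t₁ - (2*r) • Γ' a := by
      rw [hgdef]
      have hc : k*(t₂-a)^2/2 = k*(t₁-a)^2/2 := by rw [ht₁def, ht₂def]; ring
      have ht21 : (2*r) • Γ' a = t₂ • Γ' a - t₁ • Γ' a := by
        rw [← sub_smul, ht₁def, ht₂def, show a + r - (a - r) = 2*r by ring]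
      simp only []
      rw [hc, ht21]
      abel
    have hnorm21 : ‖t₂ - t₁‖ = 2*r := by
      rw [ht₁def, ht₂def, show a + r - (a - r) = 2*r by ring, Real.norm_eq_abs,
        abs_of_pos (by linarith)]
    rw [hgsub, hnorm21] at key
    exact key
  have hE1 : |E1| ≤ 2*δ*r^2 := by
    have h : |(Γ t₂ - Γ t₁ - (2*r) • Γ' a).1| ≤ (δ*r)*(2*r) := by
      have h0 := le_trans (norm_fst_le (Γ t₂ - Γ t₁ - (2*r) • Γ' a)) hchord
      rwa [Real.norm_eq_abs] at h0
    have heq : (Γ t₂ - Γ t₁ - (2*r) • Γ' a).1 = E1 := by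
      show (Γ t₂).1 - (Γ t₁).1 - 2*r * (Γ' a).1 = E1
      rw [hE1def, ← he1def]
    rw [heq] at h
    calc |E1| ≤ (δ*r)*(2*r) := h
      _ = 2*δ*r^2 := by ring
  have hE2 : |E2| ≤ 2*δ*r^2 := by
    have h : |(Γ t₂ - Γ t₁ - (2*r) • Γ' a).2| ≤ (δ*r)*(2*r) := by
      have h0 := le_trans (norm_snd_le (Γ t₂ - Γ t₁ - (2*r) • Γ' a)) hchord
      rwa [Real.norm_eq_abs] at h0
    have heq : (Γ t₂ - Γ t₁ - (2*r) • Γ' a).2 = E2 := by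
      show (Γ t₂).2 - (Γ t₁).2 - 2*r * (Γ' a).2 = E2
      rw [hE2def, ← he2def]
    rw [heq] at h
    calc |E2| ≤ (δ*r)*(2*r) := h
      _ = 2*δ*r^2 := by ring
  -- set up the linear system
  set u11 := (Γ' t₁).1 with hu11def
  set u12 := (Γ' t₁).2 with hu12def
  set u21 := (Γ' t₂).1 with hu21def
  set u22 := (Γ' t₂).2 with hu22def
  set w1 := (Γ t₂).1 - (Γ t₁).1 with hw1def
  set w2 := (Γ t₂).2 - (Γ t₁).2 with hw2def
  set D := u11*u22 - u12*u21 with hDdef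
  set s1 := (w1*u21 + w2*u22)/D with hs1def
  set s2 := (w1*u11 + w2*u12)/D with hs2def
  obtain ⟨hDlb, hσ1, hσ2⟩ := core_est k r δ e1 e2 a1 a2 b1 b2 E1 E2 u11 u12 u21 u22 w1 w2 D s1 s2
    hk0 hr hδ hr1 hδ1 hrK hδK he ha1 ha2 hb1 hb2 hE1 hE2
    (by rw [hu11def, ha1def]; ring) (by rw [hu12def, ha2def]; ring)
    (by rw [hu21def, hb1def]; ring) (by rw [hu22def, hb2def]; ring)
    (by rw [hw1def, hE1def]; ring) (by rw [hw2def, hE2def]; ring)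
    hDdef hs1def hs2def
  have hDne : D ≠ 0 := by
    intro h0; rw [h0, abs_zero] at hDlb
    exact absurd hDlb (not_le.mpr (mul_pos hr hK))
  have hσ1' : |s1 - 1/k| ≤ η := le_trans hσ1 hδCb
  have hσ2' : |s2 - 1/k| ≤ η := le_trans hσ2 hδCb
  -- Lipschitz bounds on sm, sp
  have hsmb₁ : |sm t₁ - sm a| < η := by
    have h := hKsm.dist_le_mul t₁ ht₁ a haIcc
    rw [Real.dist_eq, Real.dist_eq] at h
    calc |sm t₁ - sm a| ≤ (Ksm:ℝ) * |t₁ - a| := h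
      _ ≤ (Ksm:ℝ) * r := mul_le_mul_of_nonneg_left habs₁ Ksm.coe_nonneg
      _ < η := hrsm
  have hsmb₂ : |sm t₂ - sm a| < η := by
    have h := hKsm.dist_le_mul t₂ ht₂ a haIcc
    rw [Real.dist_eq, Real.dist_eq] at h
    calc |sm t₂ - sm a| ≤ (Ksm:ℝ) * |t₂ - a| := h
      _ ≤ (Ksm:ℝ) * r := mul_le_mul_of_nonneg_left habs₂ Ksm.coe_nonneg
      _ < η := hrsm
  have hspb₁ : |sp t₁ - sp a| < η := by
    have h := hKsp.dist_le_mul t₁ ht₁ a haIcc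
    rw [Real.dist_eq, Real.dist_eq] at h
    calc |sp t₁ - sp a| ≤ (Ksp:ℝ) * |t₁ - a| := h
      _ ≤ (Ksp:ℝ) * r := mul_le_mul_of_nonneg_left habs₁ Ksp.coe_nonneg
      _ < η := hrsp
  have hspb₂ : |sp t₂ - sp a| < η := by
    have h := hKsp.dist_le_mul t₂ ht₂ a haIcc
    rw [Real.dist_eq, Real.dist_eq] at h
    calc |sp t₂ - sp a| ≤ (Ksp:ℝ) * |t₂ - a| := h
      _ ≤ (Ksp:ℝ) * r := mul_le_mul_of_nonneg_left habs₂ Ksp.coe_nonneg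
      _ < η := hrsp
  rw [abs_le] at hσ1' hσ2'
  rw [abs_lt] at hsmb₁ hsmb₂ hspb₁ hspb₂
  have hs1mem : s1 ∈ Set.Ioo (-(sm t₁)) (sp t₁) := by
    constructor
    · linarith [hσ1'.1, hsmb₁.2, hη2]
    · linarith [hσ1'.2, hspb₁.2, hη1]
  have hs2mem : s2 ∈ Set.Ioo (-(sm t₂)) (sp t₂) := by
    constructor
    · linarith [hσ2'.1, hsmb₂.2, hη2]
    · linarith [hσ2'.2, hspb₂.2, hη1]
  -- the common point
  set p := Γ t₁ + s1 • N t₁ with hpdef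
  have hp1 : p ∈ seg t₁ := by
    rw [hseg]
    exact ⟨s1, hs1mem, rfl⟩
  have hpeq : Γ t₂ + s2 • N t₂ = p := by
    rw [hpdef, hN t₁, hN t₂]
    apply Prod.ext
    · show (Γ t₂).1 + s2 * (-(Γ' t₂).2) = (Γ t₁).1 + s1 * (-(Γ' t₁).2)
      rw [← hu12def, ← hu22def]
      have hgoal : s2 * (-u22) - s1 * (-u12) = -w1 := by
        rw [hs1def, hs2def]
        field_simp
        rw [hDdef]
        ring
      have : (Γ t₂).1 = (Γ t₁).1 + w1 := by rw [hw1def]; ring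
      rw [this]; linarith [hgoal]
    · show (Γ t₂).2 + s2 * (Γ' t₂).1 = (Γ t₁).2 + s1 * (Γ' t₁).1
      rw [← hu11def, ← hu21def]
      have hgoal : s2 * u21 - s1 * u11 = -w2 := by
        rw [hs1def, hs2def]
        field_simp
        rw [hDdef]
        ring
      have : (Γ t₂).2 = (Γ t₁).2 + w2 := by rw [hw2def]; ring
      rw [this]; linarith [hgoal]
  have hp2 : p ∈ seg t₂ := by
    rw [hseg]
    exact ⟨s2, hs2mem, hpeq⟩
  have hne : t₁ ≠ t₂ := by
    rw [ht₁def, ht₂def]; intro h; linarith only [h, hr]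
  have hempty := hdisj t₁ ht₁ t₂ ht₂ hne
  exact Set.eq_empty_iff_forall_notMem.mp hempty p ⟨hp1, hp2⟩
end
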